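/- Let V be a finite type, W : V → V → ℝ a row-substochastic matrix, α ∈ (0,1), and s ∈ V. If a vector x : V → ℝ satisfies x v = α·δ_{s,v} + (1−α) · ∑_{n ∈ V} x n · W n v for all v ∈ V (where δ_{s,v} = 1 if s = v and 0 otherwise), then x v = PPR_W(s, v) for all v ∈ V; i.e., the Personalized PageRank vector is the unique solution of the fixed-point equation. -/

import Mathlib

open scoped BigOperators

/-- A matrix is row-substochastic if all entries are nonnegative and each row sums to at most 1. -/
def RowSubstochastic {V : Type*} [Fintype V] (W : Matrix V V ℝ) : Prop :=
  (∀ i j, 0 ≤ W i j) ∧ ∀ i, ∑ j, W i j ≤ 1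

/-- Personalized PageRank: `PPR W α s v = α * ∑' l, (1-α)^l * (W^l) s v`. -/
noncomputable def PPR {V : Type*} [Fintype V] [DecidableEq V]
    (W : Matrix V V ℝ) (α : ℝ) (s v : V) : ℝ :=
  α * ∑' l : ℕ, (1 - α) ^ l * (W ^ l) s v

lemma pow_substoch {V : Type*} [Fintype V] [DecidableEq V] (W : Matrix V V ℝ)
    (hW : RowSubstochastic W) (l : ℕ) :
    (∀ i j, 0 ≤ (W ^ l) i j) ∧ ∀ i, ∑ j, (W ^ l) i j ≤ 1 := by
  induction l with
  | zero =>
    constructor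
    · intro i j
      simp only [pow_zero, Matrix.one_apply]
      split <;> norm_num
    · intro i; simp [Matrix.one_apply]
  | succ n ih =>
    obtain ⟨h0, h1⟩ := ih
    constructor
    · intro i j
      rw [pow_succ, Matrix.mul_apply]
      exact Finset.sum_nonneg fun k _ => mul_nonneg (h0 i k) (hW.1 k j)
    · intro i
      simp only [pow_succ, Matrix.mul_apply]
      rw [Finset.sum_comm]
      calc ∑ k, ∑ j, (W ^ n) i k * W k j = ∑ k, (W ^ n) i k * ∑ j, W k j := by
            simp [Finset.mul_sum]
        _ ≤ ∑ k, (W ^ n) i k * 1 :=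
            Finset.sum_le_sum fun k _ =>
              mul_le_mul_of_nonneg_left (hW.2 k) (h0 i k)
        _ ≤ 1 := by simpa using h1 i

lemma entry_le_one {V : Type*} [Fintype V] [DecidableEq V] (W : Matrix V V ℝ)
    (hW : RowSubstochastic W) (l : ℕ) (i j : V) : (W ^ l) i j ≤ 1 := by
  obtain ⟨h0, h1⟩ := pow_substoch W hW l
  calc (W ^ l) i j ≤ ∑ k, (W ^ l) i k :=
        Finset.single_le_sum (fun k _ => h0 i k) (Finset.mem_univ j)
    _ ≤ 1 := h1 i

lemma ppr_summable {V : Type*} [Fintype V] [DecidableEq V] (W : Matrix V V ℝ)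
    (hW : RowSubstochastic W) {α : ℝ} (hα : α ∈ Set.Ioo (0 : ℝ) 1) (i j : V) :
    Summable fun l : ℕ => (1 - α) ^ l * (W ^ l) i j := by
  have h0 : (0:ℝ) ≤ 1 - α := by linarith [hα.2]
  have h1 : (1 - α : ℝ) < 1 := by linarith [hα.1]
  apply Summable.of_norm_bounded (summable_geometric_of_lt_one h0 h1)
  intro l
  rw [Real.norm_eq_abs, abs_mul, abs_of_nonneg (pow_nonneg h0 l),
    abs_of_nonneg ((pow_substoch W hW l).1 i j)]
  calc (1 - α) ^ l * (W ^ l) i j ≤ (1 - α) ^ l * 1 :=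
        mul_le_mul_of_nonneg_left (entry_le_one W hW l i j) (pow_nonneg h0 l)
    _ = (1 - α) ^ l := mul_one _

lemma ppr_fixed {V : Type*} [Fintype V] [DecidableEq V] (W : Matrix V V ℝ)
    (hW : RowSubstochastic W) {α : ℝ} (hα : α ∈ Set.Ioo (0 : ℝ) 1) (s v : V) :
    PPR W α s v =
      α * (if s = v then 1 else 0) + (1 - α) * ∑ n : V, PPR W α s n * W n v := by
  have key : (∑' l : ℕ, (1 - α) ^ l * (W ^ l) s v) =
      (if s = v then 1 else 0) +
        (1 - α) * ∑ n : V, (∑' l : ℕ, (1 - α) ^ l * (W ^ l) s n) * W n v := by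
    rw [Summable.tsum_eq_zero_add (ppr_summable W hW hα s v)]
    congr 1
    · simp [Matrix.one_apply]
    · have hsum : ∀ n : V, Summable fun l : ℕ => ((1 - α) ^ l * (W ^ l) s n) * W n v :=
        fun n => (ppr_summable W hW hα s n).mul_right _
      calc (∑' l : ℕ, (1 - α) ^ (l + 1) * (W ^ (l + 1)) s v)
          = ∑' l : ℕ, (1 - α) * ∑ n : V, ((1 - α) ^ l * (W ^ l) s n) * W n v := by
            apply tsum_congr; intro l
            rw [pow_succ, pow_succ, Matrix.mul_apply, Finset.mul_sum, Finset.mul_sum]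
            apply Finset.sum_congr rfl; intro n _; ring
        _ = (1 - α) * ∑' l : ℕ, ∑ n : V, ((1 - α) ^ l * (W ^ l) s n) * W n v := by
            rw [tsum_mul_left]
        _ = (1 - α) * ∑ n : V, (∑' l : ℕ, (1 - α) ^ l * (W ^ l) s n) * W n v := by
            congr 1
            rw [Summable.tsum_finsetSum (fun n _ => hsum n)]
            apply Finset.sum_congr rfl; intro n _
            rw [tsum_mul_right]
  simp only [PPR]
  rw [key]
  rw [mul_add]
  congr 1
  rw [Finset.mul_sum, Finset.mul_sum, Finset.mul_sum]
  ring_nf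

theorem ppr_fixed_point_unique
    {V : Type*} [Fintype V] [DecidableEq V] (W : Matrix V V ℝ)
    (hW : RowSubstochastic W) (α : ℝ) (hα : α ∈ Set.Ioo (0 : ℝ) 1) (s : V)
    (x : V → ℝ)
    (hx : ∀ v : V, x v =
      α * (if s = v then 1 else 0) + (1 - α) * ∑ n : V, x n * W n v) :
    ∀ v : V, x v = PPR W α s v := by
  set d : V → ℝ := fun v => x v - PPR W α s v with hd
  have hdv : ∀ v, d v = (1 - α) * ∑ n : V, d n * W n v := by
    intro v
    have h1 := hx v
    have h2 := ppr_fixed W hW hα s v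
    simp only [hd]
    rw [h1, h2]
    rw [Finset.mul_sum, Finset.mul_sum, Finset.mul_sum]
    ring_nf
    rw [← Finset.sum_sub_distrib]
    apply Finset.sum_congr rfl; intro n _; ring
  have h0 : (0:ℝ) ≤ 1 - α := by linarith [hα.2]
  set S : ℝ := ∑ v, |d v| with hS
  have hS0 : 0 ≤ S := Finset.sum_nonneg fun v _ => abs_nonneg _
  have hSle : S ≤ (1 - α) * S := by
    calc S = ∑ v, |(1 - α) * ∑ n : V, d n * W n v| := by
          apply Finset.sum_congr rfl; intro v _; rw [hdv v]
      _ ≤ ∑ v, (1 - α) * ∑ n : V, |d n| * W n v := by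
          apply Finset.sum_le_sum; intro v _
          rw [abs_mul, abs_of_nonneg h0]
          apply mul_le_mul_of_nonneg_left _ h0
          calc |∑ n : V, d n * W n v| ≤ ∑ n : V, |d n * W n v| :=
                Finset.abs_sum_le_sum_abs _ _
            _ = ∑ n : V, |d n| * W n v := by
                apply Finset.sum_congr rfl; intro n _
                rw [abs_mul, abs_of_nonneg (hW.1 n v)]
      _ = (1 - α) * ∑ n : V, |d n| * ∑ v, W n v := by
          rw [← Finset.mul_sum, Finset.sum_comm]
          congr 1
          apply Finset.sum_congr rfl; intro n _
          rw [Finset.mul_sum]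
      _ ≤ (1 - α) * ∑ n : V, |d n| * 1 := by
          apply mul_le_mul_of_nonneg_left _ h0
          apply Finset.sum_le_sum; intro n _
          exact mul_le_mul_of_nonneg_left (hW.2 n) (abs_nonneg _)
      _ = (1 - α) * S := by simp [hS]
  have hSz : S = 0 := by nlinarith [hα.1]
  intro v
  have : |d v| ≤ S := Finset.single_le_sum (fun n _ => abs_nonneg (d n)) (Finset.mem_univ v)
  have : |d v| = 0 := le_antisymm (hSz ▸ this) (abs_nonneg _)
  have := abs_eq_zero.mp this
  simpa [hd, sub_eq_zero] using this
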